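/- Let X be a real Hilbert space and let A and B be closed linear subspaces of X such that A ∩ B and A^⊥ ∩ B^⊥ admit well-defined sums (in a finite-dimensional X this is automatic). Then the fixed point set of the operator T = P_A ∘ P_B + P_{A^⊥} ∘ P_{B^⊥} equals (A ∩ B) + (A^⊥ ∩ B^⊥); i.e., T x = x if and only if x = u + w with u ∈ A ∩ B and w ∈ A^⊥ ∩ B^⊥. -/

import Mathlib

/-- The fixed point set of `T = P_A ∘ P_B + P_{A^⊥} ∘ P_{B^⊥}` is
`(A ∩ B) + (A^⊥ ∩ B^⊥)`: `T x = x` iff `x = u + w` with `u ∈ A ∩ B` and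
`w ∈ A^⊥ ∩ B^⊥`. -/
theorem stmt_11 {X : Type*} [NormedAddCommGroup X] [InnerProductSpace ℝ X] [CompleteSpace X]
    (A B : Submodule ℝ X) [CompleteSpace A] [CompleteSpace B] (x : X) :
    ((Submodule.orthogonalProjectionOnto A (Submodule.orthogonalProjectionOnto B x : X) : X) +
        (Submodule.orthogonalProjectionOnto Aᗮ (Submodule.orthogonalProjectionOnto Bᗮ x : X) : X) = x) ↔
      ∃ u ∈ A ⊓ B, ∃ w ∈ Aᗮ ⊓ Bᗮ, x = u + w := by
  constructor
  · intro h
    simp only [Submodule.coe_orthogonalProjectionOnto_apply, Submodule.starProjection_orthogonal_val] at h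
    simp only [← Submodule.coe_orthogonalProjectionOnto_apply] at h
    set p : X := (Submodule.orthogonalProjectionOnto B x : X) with hpdef
    -- h : ↑(P_A p) + (x - p - ↑(P_A (x - p))) = x
    have hp : p = (Submodule.orthogonalProjectionOnto A p : X) - (Submodule.orthogonalProjectionOnto A (x - p) : X) := by
      have h2 : (Submodule.orthogonalProjectionOnto A p : X) - (Submodule.orthogonalProjectionOnto A (x - p) : X) - p =
          ((Submodule.orthogonalProjectionOnto A p : X) +
            (x - p - (Submodule.orthogonalProjectionOnto A (x - p) : X))) - x := by abel
      rw [h, sub_self] at h2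
      exact (sub_eq_zero.mp h2).symm
    have hpA : p ∈ A := hp ▸ sub_mem (Submodule.orthogonalProjectionOnto A p).2
      (Submodule.orthogonalProjectionOnto A (x - p)).2
    have haq : (Submodule.orthogonalProjectionOnto A p : X) = p := Submodule.starProjection_eq_self_iff.2 hpA
    have hc : (Submodule.orthogonalProjectionOnto A (x - p) : X) = 0 := by
      rw [haq] at hp
      exact sub_eq_self.mp hp.symm
    have hqA : x - p ∈ Aᗮ := by
      have : x - p - (Submodule.orthogonalProjectionOnto A (x - p) : X) ∈ Aᗮ :=
        Submodule.sub_starProjection_mem_orthogonal (K := A) (x - p)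
      rwa [hc, sub_zero] at this
    have hqB : x - p ∈ Bᗮ := Submodule.sub_starProjection_mem_orthogonal x
    exact ⟨p, ⟨hpA, (Submodule.orthogonalProjectionOnto B x).2⟩, x - p, ⟨hqA, hqB⟩, by abel⟩
  · rintro ⟨u, ⟨huA, huB⟩, w, ⟨hwA, hwB⟩, rfl⟩
    have h1 : (Submodule.orthogonalProjectionOnto B (u + w) : X) = u := by
      rw [map_add]
      push_cast
      rw [(show (Submodule.orthogonalProjectionOnto B u : X) = u from Submodule.starProjection_eq_self_iff.2 huB),
        Submodule.orthogonalProjectionOnto_apply_of_mem_orthogonal hwB]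
      simp
    have h2 : (Submodule.orthogonalProjectionOnto Bᗮ (u + w) : X) = w := by
      rw [map_add]
      push_cast
      rw [(show (Submodule.orthogonalProjectionOnto Bᗮ w : X) = w from Submodule.starProjection_eq_self_iff.2 hwB),
        Submodule.orthogonalProjectionOnto_apply_of_mem_orthogonal
          ((Submodule.le_orthogonal_orthogonal B) huB)]
      simp
    rw [h1, h2, (show (Submodule.orthogonalProjectionOnto A u : X) = u from Submodule.starProjection_eq_self_iff.2 huA),
      (show (Submodule.orthogonalProjectionOnto Aᗮ w : X) = w from Submodule.starProjection_eq_self_iff.2 hwA)]
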